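/- Let S be a symmetric N²×N² real matrix that commutes with E⊗I and with I⊗E, and let h ∈ ℝ^{N²}. Define the vector field f(q) = J_0(q, S(q−h)). Then f is diagonal-free: for every index i, every q ∈ ℝ^{N²} and every t ∈ ℝ, the i-th component satisfies (f(q + t e_i))_i = (f(q))_i, i.e. the i-th component of f does not depend on the i-th variable. -/

import Mathlib

open Matrix
open scoped Kronecker

noncomputable section

/-- The `N×N` cyclic shift matrix: `E i j = 1` iff `j ≡ i+1 (mod N)`. -/
def shiftE (N : ℕ) : Matrix (Fin N) (Fin N) ℝ :=
  Matrix.of fun i j => if ((i : ℕ) + 1) % N = (j : ℕ) then 1 else 0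

/-- The grid spacing `δ = 2π/N`. -/
def gridDelta (N : ℕ) : ℝ := 2 * Real.pi / N

/-- The central divided-difference matrix `D = (E - Eᵀ)/(2δ)`. -/
def Dmat (N : ℕ) : Matrix (Fin N) (Fin N) ℝ :=
  (2 * gridDelta N)⁻¹ • (shiftE N - (shiftE N)ᵀ)

/-- `D_x = I ⊗ D`. -/
def Dx (N : ℕ) : Matrix (Fin N × Fin N) (Fin N × Fin N) ℝ :=
  (1 : Matrix (Fin N) (Fin N) ℝ) ⊗ₖ Dmat N

/-- `D_y = D ⊗ I`. -/
def Dy (N : ℕ) : Matrix (Fin N × Fin N) (Fin N × Fin N) ℝ :=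
  Dmat N ⊗ₖ (1 : Matrix (Fin N) (Fin N) ℝ)

/-- `J_0(q, ψ) = (D_x q)∗(D_y ψ) − (D_y q)∗(D_x ψ)` (componentwise products). -/
def J0 (N : ℕ) (q ψ : Fin N × Fin N → ℝ) : Fin N × Fin N → ℝ :=
  (Dx N).mulVec q * (Dy N).mulVec ψ - (Dy N).mulVec q * (Dx N).mulVec ψ

/-- `J_E(q, ψ) = D_x(q ∗ D_y ψ) − D_y(q ∗ D_x ψ)`. -/
def JE (N : ℕ) (q ψ : Fin N × Fin N → ℝ) : Fin N × Fin N → ℝ :=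
  (Dx N).mulVec (q * (Dy N).mulVec ψ) - (Dy N).mulVec (q * (Dx N).mulVec ψ)

/-- `J_Z(q, ψ) = D_y((D_x q) ∗ ψ) − D_x((D_y q) ∗ ψ)`. -/
def JZ (N : ℕ) (q ψ : Fin N × Fin N → ℝ) : Fin N × Fin N → ℝ :=
  (Dy N).mulVec ((Dx N).mulVec q * ψ) - (Dx N).mulVec ((Dy N).mulVec q * ψ)

/-- The Arakawa energy–enstrophy bracket `J_EZ = (J_0 + J_E + J_Z)/3`. -/
def JEZ (N : ℕ) (q ψ : Fin N × Fin N → ℝ) : Fin N × Fin N → ℝ :=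
  (3 : ℝ)⁻¹ • (J0 N q ψ + JE N q ψ + JZ N q ψ)

/-- `E` has zero diagonal for `N ≥ 2`. -/
lemma shiftE_diag (N : ℕ) (hN : 2 ≤ N) (b : Fin N) : shiftE N b b = 0 := by
  have hb : (b : ℕ) < N := b.isLt
  have : ((b : ℕ) + 1) % N ≠ (b : ℕ) := by
    rcases Nat.lt_or_ge ((b : ℕ) + 1) N with h1 | h1
    · rw [Nat.mod_eq_of_lt h1]; omega
    · have : (b : ℕ) + 1 = N := by omega
      rw [this, Nat.mod_self]; omega
  simp [shiftE, this]

lemma Dmat_transpose (N : ℕ) : (Dmat N)ᵀ = -Dmat N := by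
  unfold Dmat
  rw [transpose_smul, transpose_sub, transpose_transpose]
  rw [← smul_neg, neg_sub]

lemma Dmat_diag (N : ℕ) (hN : 2 ≤ N) (b : Fin N) : Dmat N b b = 0 := by
  simp [Dmat, shiftE_diag N hN b, Matrix.transpose_apply]

lemma Dx_transpose (N : ℕ) : (Dx N)ᵀ = -Dx N := by
  unfold Dx
  rw [← kroneckerMap_transpose, transpose_one, Dmat_transpose]
  ext ⟨a, b⟩ ⟨c, d⟩
  simp [kroneckerMap_apply, Matrix.kronecker, mul_comm]

lemma Dy_transpose (N : ℕ) : (Dy N)ᵀ = -Dy N := by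
  unfold Dy
  rw [← kroneckerMap_transpose, transpose_one, Dmat_transpose]
  ext ⟨a, b⟩ ⟨c, d⟩
  simp [kroneckerMap_apply, Matrix.kronecker]

section Main

variable (N : ℕ)

lemma one_kron_sub (A B : Matrix (Fin N) (Fin N) ℝ) :
    (1 : Matrix (Fin N) (Fin N) ℝ) ⊗ₖ (A - B)
      = (1 : Matrix (Fin N) (Fin N) ℝ) ⊗ₖ A - (1 : Matrix (Fin N) (Fin N) ℝ) ⊗ₖ B := by
  ext ⟨a, b⟩ ⟨c, d⟩
  simp [Matrix.kronecker, kroneckerMap_apply, mul_sub]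

lemma sub_kron_one (A B : Matrix (Fin N) (Fin N) ℝ) :
    (A - B) ⊗ₖ (1 : Matrix (Fin N) (Fin N) ℝ)
      = A ⊗ₖ (1 : Matrix (Fin N) (Fin N) ℝ) - B ⊗ₖ (1 : Matrix (Fin N) (Fin N) ℝ) := by
  ext ⟨a, b⟩ ⟨c, d⟩
  simp [Matrix.kronecker, kroneckerMap_apply, sub_mul]

end Main

theorem J0_diagonal_free (N : ℕ) (hN : 3 ≤ N)
    (S : Matrix (Fin N × Fin N) (Fin N × Fin N) ℝ)
    (hSsymm : Sᵀ = S)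
    (hS1 : S * (shiftE N ⊗ₖ (1 : Matrix (Fin N) (Fin N) ℝ)) =
      (shiftE N ⊗ₖ (1 : Matrix (Fin N) (Fin N) ℝ)) * S)
    (hS2 : S * ((1 : Matrix (Fin N) (Fin N) ℝ) ⊗ₖ shiftE N) =
      ((1 : Matrix (Fin N) (Fin N) ℝ) ⊗ₖ shiftE N) * S)
    (h : Fin N × Fin N → ℝ) :
    ∀ (i : Fin N × Fin N) (q : Fin N × Fin N → ℝ) (t : ℝ),
      J0 N (q + t • (Pi.single i 1 : Fin N × Fin N → ℝ))
        (S.mulVec (q + t • (Pi.single i 1 : Fin N × Fin N → ℝ) - h)) i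
      = J0 N q (S.mulVec (q - h)) i := by
  intro i q t
  have hN2 : 2 ≤ N := by omega
  -- S commutes with transposes of kronecker factors
  have hS1T : S * (shiftE N ⊗ₖ (1 : Matrix (Fin N) (Fin N) ℝ))ᵀ =
      (shiftE N ⊗ₖ (1 : Matrix (Fin N) (Fin N) ℝ))ᵀ * S := by
    have := congrArg Matrix.transpose hS1
    rw [transpose_mul, transpose_mul, hSsymm] at this
    exact this.symm
  have hS2T : S * ((1 : Matrix (Fin N) (Fin N) ℝ) ⊗ₖ shiftE N)ᵀ =
      ((1 : Matrix (Fin N) (Fin N) ℝ) ⊗ₖ shiftE N)ᵀ * S := by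
    have := congrArg Matrix.transpose hS2
    rw [transpose_mul, transpose_mul, hSsymm] at this
    exact this.symm
  -- S commutes with Dx and Dy
  have hDx : Dx N = (2 * gridDelta N)⁻¹ •
      ((1 : Matrix (Fin N) (Fin N) ℝ) ⊗ₖ shiftE N
        - ((1 : Matrix (Fin N) (Fin N) ℝ) ⊗ₖ shiftE N)ᵀ) := by
    unfold Dx Dmat
    rw [Matrix.kronecker_smul, one_kron_sub]
    congr 1
    rw [← kroneckerMap_transpose, transpose_one]
  have hDy : Dy N = (2 * gridDelta N)⁻¹ •
      (shiftE N ⊗ₖ (1 : Matrix (Fin N) (Fin N) ℝ)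
        - (shiftE N ⊗ₖ (1 : Matrix (Fin N) (Fin N) ℝ))ᵀ) := by
    unfold Dy Dmat
    rw [Matrix.smul_kronecker, sub_kron_one]
    congr 1
    rw [← kroneckerMap_transpose, transpose_one]
  have hcommx : S * Dx N = Dx N * S := by
    rw [hDx, Matrix.mul_smul, Matrix.smul_mul, Matrix.mul_sub, Matrix.sub_mul,
      hS2, hS2T]
  have hcommy : S * Dy N = Dy N * S := by
    rw [hDy, Matrix.mul_smul, Matrix.smul_mul, Matrix.mul_sub, Matrix.sub_mul,
      hS1, hS1T]
  -- diagonal of Dx*S and Dy*S vanish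
  have hdiagx : (Dx N * S) i i = 0 := by
    have hT : (Dx N * S)ᵀ = -(Dx N * S) := by
      rw [transpose_mul, hSsymm, Dx_transpose, Matrix.mul_neg, hcommx]
    have := congrFun (congrFun hT i) i
    rw [Matrix.transpose_apply, Matrix.neg_apply] at this
    linarith
  have hdiagy : (Dy N * S) i i = 0 := by
    have hT : (Dy N * S)ᵀ = -(Dy N * S) := by
      rw [transpose_mul, hSsymm, Dy_transpose, Matrix.mul_neg, hcommy]
    have := congrFun (congrFun hT i) i
    rw [Matrix.transpose_apply, Matrix.neg_apply] at this
    linarith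
  -- diagonal of Dx and Dy vanish
  have hdx : Dx N i i = 0 := by
    obtain ⟨a, b⟩ := i
    simp [Dx, Matrix.kronecker, kroneckerMap_apply, Dmat_diag N hN2]
  have hdy : Dy N i i = 0 := by
    obtain ⟨a, b⟩ := i
    simp [Dy, Matrix.kronecker, kroneckerMap_apply, Dmat_diag N hN2]
  -- expand
  have key : ∀ (M : Matrix (Fin N × Fin N) (Fin N × Fin N) ℝ),
      M.mulVec (S.mulVec (q + t • (Pi.single i 1 : Fin N × Fin N → ℝ) - h)) i
        = M.mulVec (S.mulVec (q - h)) i + t * (M * S) i i := by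
    intro M
    have : q + t • (Pi.single i 1 : Fin N × Fin N → ℝ) - h
        = (q - h) + t • (Pi.single i 1 : Fin N × Fin N → ℝ) := by
      abel
    rw [this, Matrix.mulVec_add, Matrix.mulVec_add, Matrix.mulVec_smul,
      Matrix.mulVec_smul]
    simp only [Matrix.mulVec_single, Pi.add_apply, Pi.smul_apply, smul_eq_mul, mul_one]
    congr 2
    simp [Matrix.mulVec, dotProduct, Matrix.mul_apply]
  have keyq : ∀ (M : Matrix (Fin N × Fin N) (Fin N × Fin N) ℝ),
      M.mulVec (q + t • (Pi.single i 1 : Fin N × Fin N → ℝ)) i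
        = M.mulVec q i + t * M i i := by
    intro M
    rw [Matrix.mulVec_add, Matrix.mulVec_smul]
    simp [Matrix.mulVec_single]
  simp only [J0, Pi.sub_apply, Pi.mul_apply]
  rw [key (Dx N), key (Dy N), keyq (Dx N), keyq (Dy N), hdiagx, hdiagy, hdx, hdy]
  ring
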